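/- For any integer d ≥ 2 and any real numbers x, y with sin(x + kπ/d) ≠ 0 and sin(y + kπ/d) ≠ 0 for all k ∈ {0,…,d−1} and sin(y−x) ≠ 0, the identity ∑_{k=0}^{d−1} csc(x + kπ/d)·csc(y + kπ/d) = d·(cot(dx) − cot(dy))/sin(y−x) holds. -/

import Mathlib

open Complex Finset

/-- `sin t ≠ 0` iff `exp (2 t i) ≠ 1`. -/
lemma sin_ne_zero_iff_exp (t : ℂ) : Complex.sin t ≠ 0 ↔ Complex.exp (2 * t * I) ≠ 1 := by
  rw [not_iff_not.symm, not_not, not_not, Complex.sin_eq_zero_iff, Complex.exp_eq_one_iff]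
  constructor
  · rintro ⟨k, rfl⟩
    exact ⟨k, by push_cast; ring⟩
  · rintro ⟨n, h⟩
    refine ⟨n, ?_⟩
    have h2 : (2 * I) * t = (2 * I) * (n * ↑Real.pi) := by
      rw [show (2*I)*t = 2*t*I by ring, h]; push_cast; ring
    have h2I : (2 * I : ℂ) ≠ 0 := by simp [Complex.I_ne_zero]
    exact mul_left_cancel₀ h2I h2

/-- cot in terms of the exponential. -/
lemma cot_eq_exp (t : ℂ) (h : Complex.sin t ≠ 0) :
    Complex.cos t / Complex.sin t = I + 2 * I / (Complex.exp (2 * t * I) - 1) := by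
  have hw : Complex.exp (2 * t * I) ≠ 1 := (sin_ne_zero_iff_exp t).mp h
  have hw' : Complex.exp (2 * t * I) - 1 ≠ 0 := sub_ne_zero.2 hw
  have he : Complex.exp (t * I) ≠ 0 := Complex.exp_ne_zero _
  have h2 : Complex.exp (2 * t * I) = Complex.exp (t * I) * Complex.exp (t * I) := by
    rw [← Complex.exp_add]; ring_nf
  have h3 : Complex.exp (-t * I) = (Complex.exp (t * I))⁻¹ := by
    rw [← Complex.exp_neg]; ring_nf
  rw [h2] at hw'
  rw [Complex.cos, Complex.sin, h3, h2]
  rw [Complex.sin, h3] at h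
  have hs : (Complex.exp (t * I))⁻¹ - Complex.exp (t * I) ≠ 0 := by
    intro hh; apply h; rw [hh]; ring
  have h4 : (I : ℂ) - I * Complex.exp (t * I) ^ 2 ≠ 0 := by
    intro hh
    apply hw'
    have h5 : (1 : ℂ) = Complex.exp (t * I) ^ 2 :=
      mul_left_cancel₀ Complex.I_ne_zero (by rw [mul_one]; exact sub_eq_zero.1 hh)
    rw [← pow_two, ← h5, sub_self]
  have h6 : (1 : ℂ) - Complex.exp (t * I) ^ 2 ≠ 0 := by
    intro hh; apply hw'; linear_combination -hh
  field_simp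
  ring_nf
  have h7 : (-1 : ℂ) + Complex.exp (t * I) ^ 2 ≠ 0 := by
    intro hh; apply h6; linear_combination -hh
  field_simp [h4, h6, h7]
  linear_combination (Complex.exp (t * I) ^ 4 - 1) * Complex.I_sq

/-- Partial fraction sum over roots of unity. -/
lemma aux_sum_inv (d : ℕ) (hd : 0 < d) (ζ z : ℂ) (hζ : IsPrimitiveRoot ζ d)
    (hz : ∀ k ∈ range d, z * ζ ^ k ≠ 1) :
    z ^ d ≠ 1 ∧ ∑ k ∈ range d, (1 : ℂ) / (z * ζ ^ k - 1) = d / (z ^ d - 1) := by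
  have : NeZero d := ⟨hd.ne'⟩
  have hzd : z ^ d ≠ 1 := by
    intro h
    obtain ⟨i, hi, hiz⟩ := hζ.eq_pow_of_pow_eq_one h
    rcases Nat.eq_zero_or_pos i with rfl | hi0
    · exact hz 0 (mem_range.2 hd) (by simp [← hiz])
    · refine hz (d - i) (mem_range.2 (by omega)) ?_
      rw [← hiz, ← pow_add]
      have hii : i + (d - i) = d := by omega
      rw [hii]
      exact hζ.pow_eq_one
  refine ⟨hzd, ?_⟩
  have hsub : z ^ d - 1 ≠ 0 := sub_ne_zero.2 hzd
  have key : ∀ k ∈ range d, (1 : ℂ) / (z * ζ ^ k - 1)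
      = (∑ j ∈ range d, (z * ζ ^ k) ^ j) / (z ^ d - 1) := by
    intro k hk
    have h1 : (z * ζ ^ k) ^ d = z ^ d := by
      rw [mul_pow, ← pow_mul, mul_comm k d, pow_mul, hζ.pow_eq_one, one_pow, mul_one]
    have h2 : (∑ j ∈ range d, (z * ζ ^ k) ^ j) * (z * ζ ^ k - 1) = z ^ d - 1 := by
      rw [geom_sum_mul, h1]
    rw [div_eq_div_iff (sub_ne_zero.2 (hz k hk)) hsub, one_mul, ← h2]
  rw [sum_congr rfl key, ← sum_div]
  congr 1
  have swap : ∑ k ∈ range d, ∑ j ∈ range d, (z * ζ ^ k) ^ j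
      = ∑ j ∈ range d, ∑ k ∈ range d, z ^ j * (ζ ^ j) ^ k := by
    rw [sum_comm]
    refine sum_congr rfl fun j _ => sum_congr rfl fun k _ => ?_
    rw [mul_pow, ← pow_mul, ← pow_mul, mul_comm k j]
  rw [swap]
  have inner : ∀ j ∈ range d, ∑ k ∈ range d, z ^ j * (ζ ^ j) ^ k
      = if j = 0 then (d : ℂ) else 0 := by
    intro j hj
    rcases eq_or_ne j 0 with rfl | hj0
    · simp
    · simp only [if_neg hj0]
      rw [← mul_sum]
      have hζj : ζ ^ j ≠ 1 := hζ.pow_ne_one_of_pos_of_lt hj0 (mem_range.1 hj)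
      have : (∑ k ∈ range d, (ζ ^ j) ^ k) * (ζ ^ j - 1) = 0 := by
        rw [geom_sum_mul, ← pow_mul, mul_comm j d, pow_mul, hζ.pow_eq_one, one_pow, sub_self]
      have hsum : ∑ k ∈ range d, (ζ ^ j) ^ k = 0 :=
        (mul_eq_zero.1 this).resolve_right (sub_ne_zero.2 hζj)
      rw [hsum, mul_zero]
  rw [sum_congr rfl inner]
  simp [hd]

/-- Complex cotangent sum identity. -/
lemma cot_sum_complex (d : ℕ) (hd : 0 < d) (x : ℂ)
    (hx : ∀ k ∈ range d, Complex.sin (x + k * (↑Real.pi) / d) ≠ 0) :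
    Complex.sin (d * x) ≠ 0 ∧
    ∑ k ∈ range d, Complex.cos (x + k * (↑Real.pi) / d) / Complex.sin (x + k * (↑Real.pi) / d)
      = d * (Complex.cos (d * x) / Complex.sin (d * x)) := by
  have hd' : (d : ℂ) ≠ 0 := Nat.cast_ne_zero.2 hd.ne'
  set z : ℂ := Complex.exp (2 * x * I) with hz_def
  set ζ : ℂ := Complex.exp (2 * ↑Real.pi * I / d) with hζ_def
  have hζ : IsPrimitiveRoot ζ d := by
    have := Complex.isPrimitiveRoot_exp d hd.ne'
    convert this using 2

  have hexp : ∀ k : ℕ, Complex.exp (2 * (x + k * (↑Real.pi) / d) * I) = z * ζ ^ k := by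
    intro k
    rw [hz_def, hζ_def, ← Complex.exp_nat_mul, ← Complex.exp_add]
    congr 1
    field_simp
  have hz : ∀ k ∈ range d, z * ζ ^ k ≠ 1 := by
    intro k hk
    rw [← hexp k]
    exact (sin_ne_zero_iff_exp _).mp (hx k hk)
  obtain ⟨hzd, hsum⟩ := aux_sum_inv d hd ζ z hζ hz
  have hzd_exp : Complex.exp (2 * (d * x) * I) = z ^ d := by
    rw [hz_def, ← Complex.exp_nat_mul]
    congr 1
    ring
  have hsin : Complex.sin (d * x) ≠ 0 := by
    rw [sin_ne_zero_iff_exp, hzd_exp]; exact hzd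
  refine ⟨hsin, ?_⟩
  have step : ∀ k ∈ range d,
      Complex.cos (x + k * (↑Real.pi) / d) / Complex.sin (x + k * (↑Real.pi) / d)
        = I + 2 * I / (z * ζ ^ k - 1) := by
    intro k hk
    rw [cot_eq_exp _ (hx k hk), hexp k]
  rw [sum_congr rfl step, sum_add_distrib, sum_const, card_range]
  have : ∑ k ∈ range d, 2 * I / (z * ζ ^ k - 1) = 2 * I * (d / (z ^ d - 1)) := by
    rw [← hsum, mul_sum]
    exact sum_congr rfl fun k _ => (mul_one_div _ _).symm
  rw [this, cot_eq_exp _ hsin, hzd_exp]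
  ring

/-- Real cotangent sum identity. -/
lemma cot_sum_real (d : ℕ) (hd : 0 < d) (x : ℝ)
    (hx : ∀ k ∈ range d, Real.sin (x + k * Real.pi / d) ≠ 0) :
    Real.sin (d * x) ≠ 0 ∧
    ∑ k ∈ range d, Real.cos (x + k * Real.pi / d) / Real.sin (x + k * Real.pi / d)
      = d * (Real.cos (d * x) / Real.sin (d * x)) := by
  have hx' : ∀ k ∈ range d, Complex.sin ((x : ℂ) + k * (↑Real.pi) / d) ≠ 0 := by
    intro k hk
    have := hx k hk
    rw [show ((x : ℂ) + k * (↑Real.pi) / d) = ((x + k * Real.pi / d : ℝ) : ℂ) by push_cast; ring,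
      ← Complex.ofReal_sin]
    exact_mod_cast this
  obtain ⟨hsin, hsum⟩ := cot_sum_complex d hd x hx'
  have hsin' : Real.sin (d * x) ≠ 0 := by
    intro h
    apply hsin
    rw [show ((d : ℂ) * x) = ((d * x : ℝ) : ℂ) by push_cast; ring, ← Complex.ofReal_sin, h,
      Complex.ofReal_zero]
  refine ⟨hsin', ?_⟩
  exact_mod_cast hsum

/-- For integer `d ≥ 2` and reals `x y` with `sin (x + kπ/d) ≠ 0` and `sin (y + kπ/d) ≠ 0`
for all `k < d`, and `sin (y - x) ≠ 0`, we have
`∑_{k<d} csc(x + kπ/d) csc(y + kπ/d) = d (cot(dx) - cot(dy)) / sin(y - x)`. -/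
theorem csc_sum_identity (d : ℕ) (hd : 2 ≤ d) (x y : ℝ)
    (hx : ∀ k ∈ Finset.range d, Real.sin (x + k * Real.pi / d) ≠ 0)
    (hy : ∀ k ∈ Finset.range d, Real.sin (y + k * Real.pi / d) ≠ 0)
    (hxy : Real.sin (y - x) ≠ 0) :
    ∑ k ∈ Finset.range d,
      (1 / Real.sin (x + k * Real.pi / d)) * (1 / Real.sin (y + k * Real.pi / d)) =
      d * (Real.cos (d * x) / Real.sin (d * x) - Real.cos (d * y) / Real.sin (d * y)) /
        Real.sin (y - x) := by
  have hd0 : 0 < d := by omega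
  obtain ⟨hsx, hsumx⟩ := cot_sum_real d hd0 x hx
  obtain ⟨hsy, hsumy⟩ := cot_sum_real d hd0 y hy
  have step : ∀ k ∈ range d,
      (1 / Real.sin (x + k * Real.pi / d)) * (1 / Real.sin (y + k * Real.pi / d))
      = (Real.cos (x + k * Real.pi / d) / Real.sin (x + k * Real.pi / d)
        - Real.cos (y + k * Real.pi / d) / Real.sin (y + k * Real.pi / d)) / Real.sin (y - x) := by
    intro k hk
    have ha := hx k hk
    have hb := hy k hk
    set a := x + k * Real.pi / d with hadef
    set b := y + k * Real.pi / d with hbdef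
    have hsub : y - x = b - a := by rw [hadef, hbdef]; ring
    rw [hsub, Real.sin_sub] at hxy ⊢
    field_simp
    exact (div_self (by rwa [mul_comm (Real.sin a)])).symm
  rw [sum_congr rfl step, ← sum_div, sum_sub_distrib, hsumx, hsumy]
  ring
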